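/- Let G = (V, E) be a finite connected simple graph, let (u_1, v_1), …, (u_k, v_k) be pairs of vertices with all 2k vertices u_1, v_1, …, u_k, v_k distinct, and suppose there exist pairwise vertex-disjoint paths Q_1, …, Q_k in G such that Q_i joins u_i to v_i and has at most L edges (L ≥ 1). Let π be the involution of V that swaps u_i with v_i for every i ∈ [k] and fixes all other vertices. Then rt(G, π) ≤ L + 1. -/

import Mathlib

/-- A routing round on `G`: the swap permutation of a matching of `G`, i.e. an involution
of the vertices that moves vertices only along edges of `G`. -/
def isRound {V : Type*} (G : SimpleGraph V) (σ : Equiv.Perm V) : Prop :=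
  σ * σ = 1 ∧ ∀ v : V, σ v ≠ v → G.Adj v (σ v)

/-- Composition, in order, of a list of round permutations: for `L = [σ₁, …, σₘ]`,
`rComp L = σₘ ∘ ⋯ ∘ σ₁`. -/
def rComp {V : Type*} (L : List (Equiv.Perm V)) : Equiv.Perm V :=
  L.foldl (fun p σ => σ * p) 1

/-- `rt(G, π)`: the minimum number of routing rounds (matchings of `G`) whose swap
permutations, composed in order, realize the permutation `π`. -/
noncomputable def rtP {V : Type*} (G : SimpleGraph V) (π : Equiv.Perm V) : ℕ :=
  sInf {m | ∃ L : List (Equiv.Perm V), L.length = m ∧ (∀ σ ∈ L, isRound G σ) ∧ rComp L = π}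

/-- `rt(G)`: the routing number of `G`, the maximum of `rt(G, π)` over all permutations. -/
noncomputable def rt {V : Type*} [Fintype V] [DecidableEq V] (G : SimpleGraph V) : ℕ :=
  Finset.univ.sup (rtP G)

set_option linter.unusedSectionVars false

section auxlemmas
variable {V : Type*} [DecidableEq V] {G : SimpleGraph V}

lemma rComp_aux (L : List (Equiv.Perm V)) : ∀ acc, L.foldl (fun p σ => σ * p) acc = rComp L * acc := by
  induction L with
  | nil => intro acc; simp [rComp]
  | cons a L ih =>
    intro acc
    have h1 : (a :: L).foldl (fun p σ => σ * p) acc = L.foldl (fun p σ => σ * p) (a * acc) := rfl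
    have h2 : rComp (a :: L) = L.foldl (fun p σ => σ * p) (a * 1) := rfl
    rw [h1, ih (a * acc), h2, ih (a * 1)]
    group

lemma rComp_cons (a : Equiv.Perm V) (L : List (Equiv.Perm V)) :
    rComp (a :: L) = rComp L * a := by
  have h2 : rComp (a :: L) = L.foldl (fun p σ => σ * p) (a * 1) := rfl
  rw [h2, rComp_aux]
  group

lemma rComp_append (A B : List (Equiv.Perm V)) : rComp (A ++ B) = rComp B * rComp A := by
  induction A with
  | nil => simp [rComp]
  | cons a A ih => rw [List.cons_append, rComp_cons, ih, rComp_cons, mul_assoc]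

lemma isRound_one : isRound G 1 := ⟨by simp, by simp⟩

lemma rComp_replicate_one (m : ℕ) : rComp (List.replicate m (1 : Equiv.Perm V)) = 1 := by
  induction m with
  | zero => rfl
  | succ n ih => rw [List.replicate_succ, rComp_cons, ih]; simp

lemma support_closed (σ : Equiv.Perm V) {x : V} (h : σ x ≠ x) : σ (σ x) ≠ σ x :=
  fun h' => h (σ.injective h')

lemma commute_of_disjoint (σ τ : Equiv.Perm V) (S T : V → Prop)
    (hσ : ∀ x, σ x ≠ x → S x) (hτ : ∀ x, τ x ≠ x → T x)
    (hd : ∀ x, S x → ¬ T x) : Commute σ τ := by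
  apply Equiv.ext
  intro x
  show σ (τ x) = τ (σ x)
  by_cases h1 : σ x = x <;> by_cases h2 : τ x = x
  · simp [h1, h2]
  · have : σ (τ x) = τ x := by
      by_contra hc
      exact hd _ (hσ _ hc) (hτ _ (support_closed τ h2))
    rw [this, h1]
  · have : τ (σ x) = σ x := by
      by_contra hc
      exact hd _ (hσ _ (support_closed σ h1)) (hτ _ hc)
    rw [this, h2]
  · exact absurd (hτ _ h2) (hd _ (hσ _ h1))

lemma isRound_mul (σ τ : Equiv.Perm V) (S T : V → Prop)
    (hσ : isRound G σ) (hτ : isRound G τ)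
    (hσS : ∀ x, σ x ≠ x → S x) (hτT : ∀ x, τ x ≠ x → T x)
    (hd : ∀ x, S x → ¬ T x) : isRound G (σ * τ) := by
  have hc := commute_of_disjoint σ τ S T hσS hτT hd
  constructor
  · calc σ * τ * (σ * τ) = σ * (τ * σ) * τ := by group
    _ = σ * (σ * τ) * τ := by rw [hc.eq]
    _ = (σ * σ) * (τ * τ) := by group
    _ = 1 := by rw [hσ.1, hτ.1]; simp
  · intro x hx
    by_cases h2 : τ x = x
    · have : (σ * τ) x = σ x := by simp [Equiv.Perm.mul_apply, h2]
      rw [this] at hx ⊢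
      exact hσ.2 x hx
    · have : σ (τ x) = τ x := by
        by_contra hc'
        exact hd _ (hσS _ hc') (hτT _ (support_closed τ h2))
      have : (σ * τ) x = τ x := by simp [Equiv.Perm.mul_apply, this]
      rw [this] at hx ⊢
      exact hτ.2 x h2

lemma commute_rComp (a : Equiv.Perm V) (B : List (Equiv.Perm V))
    (h : ∀ b ∈ B, Commute a b) : Commute a (rComp B) := by
  induction B with
  | nil => simpa [rComp] using Commute.one_right a
  | cons b B ih =>
    rw [rComp_cons]
    exact Commute.mul_right (ih fun c hc => h c (List.mem_cons_of_mem _ hc))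
      (h b (List.mem_cons_self))

lemma rComp_support (B : List (Equiv.Perm V)) (S : V → Prop)
    (h : ∀ σ ∈ B, ∀ x, σ x ≠ x → S x) : ∀ x, rComp B x ≠ x → S x := by
  induction B with
  | nil => intro x hx; simp [rComp] at hx
  | cons b B ih =>
    intro x hx
    rw [rComp_cons] at hx
    by_cases hb : b x = x
    · exact ih (fun σ hσ => h σ (List.mem_cons_of_mem _ hσ)) x
        (by rwa [Equiv.Perm.mul_apply, hb] at hx)
    · exact h b (List.mem_cons_self) x hb

lemma merge_lists (A B : List (Equiv.Perm V)) (S T : V → Prop)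
    (hlen : A.length = B.length)
    (hA : ∀ σ ∈ A, isRound G σ ∧ ∀ x, σ x ≠ x → S x)
    (hB : ∀ σ ∈ B, isRound G σ ∧ ∀ x, σ x ≠ x → T x)
    (hd : ∀ x, S x → ¬ T x) :
    (List.zipWith (· * ·) A B).length = A.length ∧
    (∀ σ ∈ List.zipWith (· * ·) A B, isRound G σ ∧ ∀ x, σ x ≠ x → S x ∨ T x) ∧
    rComp (List.zipWith (· * ·) A B) = rComp A * rComp B := by
  induction A generalizing B with
  | nil =>
    cases B with
    | nil => simp [rComp]
    | cons b B => simp at hlen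
  | cons a A ih =>
    cases B with
    | nil => simp at hlen
    | cons b B =>
      have hlen' : A.length = B.length := by simpa using hlen
      have hA' : ∀ σ ∈ A, isRound G σ ∧ ∀ x, σ x ≠ x → S x :=
        fun σ hσ => hA σ (List.mem_cons_of_mem _ hσ)
      have hB' : ∀ σ ∈ B, isRound G σ ∧ ∀ x, σ x ≠ x → T x :=
        fun σ hσ => hB σ (List.mem_cons_of_mem _ hσ)
      obtain ⟨h1, h2, h3⟩ := ih B hlen' hA' hB'
      have ha := hA a (List.mem_cons_self)
      have hb := hB b (List.mem_cons_self)
      refine ⟨by simpa using h1, ?_, ?_⟩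
      · intro σ hσ
        rw [List.zipWith_cons_cons] at hσ
        rcases List.mem_cons.1 hσ with h | h
        · subst h
          refine ⟨isRound_mul a b S T ha.1 hb.1 ha.2 hb.2 hd, ?_⟩
          intro x hx
          by_cases h2' : b x = x
          · left; apply ha.2; rwa [Equiv.Perm.mul_apply, h2'] at hx
          · right; exact hb.2 x h2'
        · exact h2 σ h
      · rw [List.zipWith_cons_cons, rComp_cons, h3, rComp_cons, rComp_cons]
        have hcomm : Commute a (rComp B) := by
          apply commute_rComp
          intro c hc
          exact commute_of_disjoint a c S T ha.2 (hB' c hc).2 hd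
        calc rComp A * rComp B * (a * b)
            = rComp A * (rComp B * a) * b := by group
          _ = rComp A * (a * rComp B) * b := by rw [hcomm.eq]
          _ = rComp A * a * (rComp B * b) := by group

lemma walk_getVert_inj {a b : V} (p : G.Walk a b) (hp : p.IsPath) :
    ∀ i ≤ p.length, ∀ j ≤ p.length, p.getVert i = p.getVert j → i = j := by
  induction p with
  | nil => intro i hi j hj _; simp at hi hj; omega
  | cons h q ih =>
    rw [SimpleGraph.Walk.cons_isPath_iff] at hp
    intro i hi j hj heq
    have key : ∀ m, m ≤ q.length → (SimpleGraph.Walk.cons h q).getVert (m+1) = q.getVert m :=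
      fun m _ => rfl
    match i, j with
    | 0, 0 => rfl
    | 0, (m+1) =>
      exfalso
      rw [SimpleGraph.Walk.getVert_zero, key m (by simpa using hj)] at heq
      exact hp.2 (SimpleGraph.Walk.mem_support_iff_exists_getVert.2 ⟨m, heq.symm, by simpa using hj⟩)
    | (m+1), 0 =>
      exfalso
      rw [SimpleGraph.Walk.getVert_zero, key m (by simpa using hi)] at heq
      exact hp.2 (SimpleGraph.Walk.mem_support_iff_exists_getVert.2 ⟨m, heq, by simpa using hi⟩)
    | (m+1), (n+1) =>
      have := ih hp.1 m (by simpa using hi) n (by simpa using hj)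
        (by rw [← key m (by simpa using hi), ← key n (by simpa using hj)]; exact heq)
      omega

lemma local_route (G : SimpleGraph V) : ∀ ℓ : ℕ, 1 ≤ ℓ → ∀ w : ℕ → V,
    (∀ i ≤ ℓ, ∀ j ≤ ℓ, w i = w j → i = j) →
    (∀ i < ℓ, G.Adj (w i) (w (i+1))) →
    ∃ A : List (Equiv.Perm V), A.length = ℓ + 1 ∧
      (∀ σ ∈ A, isRound G σ ∧ ∀ x, σ x ≠ x → ∃ i ≤ ℓ, x = w i) ∧
      rComp A = Equiv.swap (w 0) (w ℓ) := by
  intro ℓ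
  induction ℓ using Nat.strong_induction_on with
  | _ ℓ IH =>
  intro hℓ w hinj hadj
  have hne : ∀ i ≤ ℓ, ∀ j ≤ ℓ, i ≠ j → w i ≠ w j := by
    intro i hi j hj hij heq; exact hij (hinj i hi j hj heq)
  have swap_round : ∀ i < ℓ, isRound G (Equiv.swap (w i) (w (i+1))) ∧
      ∀ x, Equiv.swap (w i) (w (i+1)) x ≠ x → x = w i ∨ x = w (i+1) := by
    intro i hi
    have hsupp : ∀ x, Equiv.swap (w i) (w (i+1)) x ≠ x → x = w i ∨ x = w (i+1) := by
      intro x hx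
      by_contra hc
      push_neg at hc
      exact hx (Equiv.swap_apply_of_ne_of_ne hc.1 hc.2)
    refine ⟨⟨Equiv.swap_mul_self _ _, ?_⟩, hsupp⟩
    intro x hx
    rcases hsupp x hx with h | h <;> subst h
    · rw [Equiv.swap_apply_left]; exact hadj i hi
    · rw [Equiv.swap_apply_right]; exact (hadj i hi).symm
  rcases ℓ with _ | _ | _ | n
  · omega
  case _ =>
    refine ⟨[Equiv.swap (w 0) (w 1), 1], rfl, ?_, ?_⟩
    · intro σ hσ
      rcases List.mem_cons.1 hσ with h | h
      · subst h
        refine ⟨(swap_round 0 one_pos).1, ?_⟩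
        intro x hx
        rcases (swap_round 0 one_pos).2 x hx with h | h
        · exact ⟨0, by omega, h⟩
        · exact ⟨1, le_refl _, h⟩
      · simp at h; subst h
        exact ⟨isRound_one, by simp⟩
    · rw [rComp_cons, rComp_cons]
      simp [rComp]
  case _ =>
    have h01 := swap_round 0 (by omega)
    have h12 := swap_round 1 (by omega)
    refine ⟨[Equiv.swap (w 0) (w 1), Equiv.swap (w 1) (w 2), Equiv.swap (w 0) (w 1)], rfl, ?_, ?_⟩
    · intro σ hσ
      have mem01 : isRound G (Equiv.swap (w 0) (w 1)) ∧
          ∀ x, Equiv.swap (w 0) (w 1) x ≠ x → ∃ i ≤ 2, x = w i := by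
        refine ⟨h01.1, fun x hx => ?_⟩
        rcases h01.2 x hx with h | h
        · exact ⟨0, by omega, h⟩
        · exact ⟨1, by omega, h⟩
      rcases List.mem_cons.1 hσ with h | h
      · subst h; exact mem01
      rcases List.mem_cons.1 h with h | h
      · subst h
        refine ⟨h12.1, fun x hx => ?_⟩
        rcases h12.2 x hx with h | h
        · exact ⟨1, by omega, h⟩
        · exact ⟨2, le_refl _, h⟩
      · simp at h; subst h; exact mem01
    · rw [rComp_cons, rComp_cons, rComp_cons]
      simp only [rComp, List.foldl_nil]
      have hswinv : (Equiv.swap (w 0) (w 1))⁻¹ = Equiv.swap (w 0) (w 1) := Equiv.swap_inv _ _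
      have : Equiv.swap (w 0) (w 1) * Equiv.swap (w 1) (w 2) * Equiv.swap (w 0) (w 1) =
          Equiv.swap (Equiv.swap (w 0) (w 1) (w 1)) (Equiv.swap (w 0) (w 1) (w 2)) := by
        rw [Equiv.swap_apply_apply, hswinv]
      rw [show (1 : Equiv.Perm V) * Equiv.swap (w 0) (w 1) = Equiv.swap (w 0) (w 1) from one_mul _] at *
      calc Equiv.swap (w 0) (w 1) * Equiv.swap (w 1) (w 2) * Equiv.swap (w 0) (w 1)
          = Equiv.swap (Equiv.swap (w 0) (w 1) (w 1)) (Equiv.swap (w 0) (w 1) (w 2)) := this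
        _ = Equiv.swap (w 0) (w 2) := by
            rw [Equiv.swap_apply_right,
              Equiv.swap_apply_of_ne_of_ne (hne 2 (by omega) 0 (by omega) (by omega))
                (hne 2 (by omega) 1 (by omega) (by omega))]
  case _ =>
    -- inner path w 1 .. w (n+2), length n+1
    obtain ⟨A', hA'len, hA'mem, hA'comp⟩ := IH (n+1) (by omega) (by omega) (fun i => w (i+1))
      (fun i hi j hj heq => by
        have := hinj (i+1) (by omega) (j+1) (by omega) heq; omega)
      (fun i hi => hadj (i+1) (by omega))
    set s1 := Equiv.swap (w 0) (w 1) with hs1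
    set s2 := Equiv.swap (w (n+2)) (w (n+3)) with hs2
    set R := s1 * s2 with hR
    have hd4 : ∀ (a b : ℕ), a ≤ n+3 → b ≤ n+3 → a ≠ b → w a ≠ w b :=
      fun a b ha hb hab => hne a ha b hb hab
    have hc12 : Commute s1 s2 := by
      apply commute_of_disjoint s1 s2 (fun x => x = w 0 ∨ x = w 1) (fun x => x = w (n+2) ∨ x = w (n+3))
      · intro x hx
        by_contra hc; push_neg at hc
        exact hx (Equiv.swap_apply_of_ne_of_ne hc.1 hc.2)
      · intro x hx
        by_contra hc; push_neg at hc
        exact hx (Equiv.swap_apply_of_ne_of_ne hc.1 hc.2)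
      · rintro x (rfl | rfl) (h | h) <;>
          [exact hd4 0 (n+2) (by omega) (by omega) (by omega) h;
           exact hd4 0 (n+3) (by omega) (by omega) (by omega) h;
           exact hd4 1 (n+2) (by omega) (by omega) (by omega) h;
           exact hd4 1 (n+3) (by omega) (by omega) (by omega) h]
    have hRsq : R * R = 1 := by
      calc R * R = s1 * (s2 * s1) * s2 := by rw [hR]; group
        _ = s1 * (s1 * s2) * s2 := by rw [hc12.symm.eq]
        _ = (s1 * s1) * (s2 * s2) := by group
        _ = 1 := by rw [hs1, hs2, Equiv.swap_mul_self, Equiv.swap_mul_self, one_mul]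
    have hRinv : R⁻¹ = R := by
      rw [eq_comm, eq_inv_iff_mul_eq_one]; exact hRsq
    have hRround : isRound G R ∧ ∀ x, R x ≠ x → ∃ i ≤ n+3, x = w i := by
      have h1 := swap_round 0 (by omega)
      have h2 := swap_round (n+2) (by omega)
      constructor
      · refine isRound_mul s1 s2 (fun x => x = w 0 ∨ x = w 1)
          (fun x => x = w (n+2) ∨ x = w (n+3)) h1.1 h2.1 h1.2 h2.2 ?_
        rintro x (rfl | rfl) (h | h) <;>
          [exact hd4 0 (n+2) (by omega) (by omega) (by omega) h;
           exact hd4 0 (n+3) (by omega) (by omega) (by omega) h;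
           exact hd4 1 (n+2) (by omega) (by omega) (by omega) h;
           exact hd4 1 (n+3) (by omega) (by omega) (by omega) h]
      · intro x hx
        by_cases h2x : s2 x = x
        · have : R x = s1 x := by rw [hR, Equiv.Perm.mul_apply, h2x]
          rw [this] at hx
          rcases h1.2 x hx with h | h
          · exact ⟨0, by omega, h⟩
          · exact ⟨1, by omega, h⟩
        · rcases h2.2 x h2x with h | h
          · exact ⟨n+2, by omega, h⟩
          · exact ⟨n+3, le_refl _, h⟩
    -- R applied to w 1 and w (n+2)
    have hR1 : R (w 1) = w 0 := by
      rw [hR, Equiv.Perm.mul_apply, hs2,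
        Equiv.swap_apply_of_ne_of_ne (hd4 1 (n+2) (by omega) (by omega) (by omega))
          (hd4 1 (n+3) (by omega) (by omega) (by omega)),
        hs1, Equiv.swap_apply_right]
    have hR2 : R (w (n+2)) = w (n+3) := by
      rw [hR, Equiv.Perm.mul_apply, hs2, Equiv.swap_apply_left, hs1,
        Equiv.swap_apply_of_ne_of_ne (hd4 (n+3) 0 (by omega) (by omega) (by omega))
          (hd4 (n+3) 1 (by omega) (by omega) (by omega))]
    refine ⟨R :: (A' ++ [R]), by simp [hA'len], ?_, ?_⟩
    · intro σ hσ
      rcases List.mem_cons.1 hσ with h | h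
      · subst h; exact hRround
      rcases List.mem_append.1 h with h | h
      · obtain ⟨hr, hs⟩ := hA'mem σ h
        refine ⟨hr, fun x hx => ?_⟩
        obtain ⟨i, hi, hxe⟩ := hs x hx
        exact ⟨i+1, by omega, hxe⟩
      · simp at h; subst h; exact hRround
    · rw [rComp_cons, rComp_append, hA'comp]
      have : rComp [R] = R := by simp [rComp]
      rw [this]
      calc R * Equiv.swap (w (0+1)) (w (n+1+1)) * R
          = R * Equiv.swap (w 1) (w (n+2)) * R⁻¹ := by rw [hRinv]
        _ = Equiv.swap (R (w 1)) (R (w (n+2))) := (Equiv.swap_apply_apply R _ _).symm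
        _ = Equiv.swap (w 0) (w (n+3)) := by rw [hR1, hR2]

end auxlemmas

section globalpart
variable {V : Type*} [DecidableEq V] {G : SimpleGraph V}

lemma pad_local (G : SimpleGraph V) {a b : V} (p : G.Walk a b) (hp : p.IsPath)
    (hab : a ≠ b) (L : ℕ) (hlenL : p.length ≤ L) :
    ∃ A : List (Equiv.Perm V), A.length = L + 1 ∧
      (∀ σ ∈ A, isRound G σ ∧ ∀ x, σ x ≠ x → x ∈ p.support) ∧
      rComp A = Equiv.swap a b := by
  have hℓ1 : 1 ≤ p.length := by
    rcases Nat.eq_zero_or_pos p.length with h | h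
    · exfalso
      apply hab
      have h1 := p.getVert_zero
      have h2 := p.getVert_length
      rw [h] at h2
      exact h1.symm.trans h2
    · exact h
  obtain ⟨A, hAlen, hAmem, hAcomp⟩ := local_route G p.length hℓ1 p.getVert
    (walk_getVert_inj p hp) (fun j hj => p.adj_getVert_succ hj)
  refine ⟨A ++ List.replicate (L + 1 - (p.length + 1)) 1, ?_, ?_, ?_⟩
  · simp [hAlen]; omega
  · intro σ hσ
    rcases List.mem_append.1 hσ with h | h
    · obtain ⟨hr, hs⟩ := hAmem σ h
      refine ⟨hr, fun x hx => ?_⟩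
      obtain ⟨j, hj, rfl⟩ := hs x hx
      exact SimpleGraph.Walk.mem_support_iff_exists_getVert.2 ⟨j, rfl, hj⟩
    · have := List.eq_of_mem_replicate h
      subst this
      exact ⟨isRound_one, by simp⟩
  · rw [rComp_append, rComp_replicate_one, one_mul, hAcomp, p.getVert_zero, p.getVert_length]

end globalpart


/-- If `(u i, v i)`, `i < k`, are pairs of vertices with all `2k` vertices distinct, joined by
pairwise vertex-disjoint paths of length at most `L ≥ 1`, then the involution swapping each
`u i` with `v i` (and fixing all other vertices) can be routed in at most `L + 1` rounds. -/
theorem rtP_swap_along_disjoint_paths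
    {V : Type*} [Fintype V] [DecidableEq V] (G : SimpleGraph V) (hG : G.Connected)
    (k L : ℕ) (hL : 1 ≤ L) (u v : Fin k → V)
    (hinj : Function.Injective (Sum.elim u v : Fin k ⊕ Fin k → V))
    (Q : ∀ i : Fin k, G.Walk (u i) (v i))
    (hpath : ∀ i, (Q i).IsPath)
    (hlen : ∀ i, (Q i).length ≤ L)
    (hdisj : ∀ i j, i ≠ j → ∀ x : V, x ∈ (Q i).support → x ∉ (Q j).support)
    (π : Equiv.Perm V)
    (hswap : ∀ i, π (u i) = v i ∧ π (v i) = u i)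
    (hfix : ∀ x : V, (∀ i, x ≠ u i ∧ x ≠ v i) → π x = x) :
    rtP G π ≤ L + 1 := by
  classical
  have huv : ∀ i j, u i ≠ v j := by
    intro i j h
    have : (Sum.inl i : Fin k ⊕ Fin k) = Sum.inr j := hinj (by simpa using h)
    simp at this
  have huu : ∀ i j : Fin k, u i = u j → i = j := by
    intro i j h
    have : (Sum.inl i : Fin k ⊕ Fin k) = Sum.inl j := hinj (by simpa using h)
    simpa using this
  have hvv : ∀ i j : Fin k, v i = v j → i = j := by
    intro i j h
    have : (Sum.inr i : Fin k ⊕ Fin k) = Sum.inr j := hinj (by simpa using h)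
    simpa using this
  have key : ∀ s : Finset (Fin k), ∃ Lc : List (Equiv.Perm V), Lc.length = L + 1 ∧
      (∀ σ ∈ Lc, isRound G σ ∧ ∀ x, σ x ≠ x → ∃ i ∈ s, x ∈ (Q i).support) ∧
      (∀ i ∈ s, rComp Lc (u i) = v i ∧ rComp Lc (v i) = u i) ∧
      (∀ x : V, (∀ i ∈ s, x ≠ u i ∧ x ≠ v i) → rComp Lc x = x) := by
    intro s
    induction s using Finset.induction_on with
    | empty =>
      refine ⟨List.replicate (L+1) 1, by simp, ?_, by simp, ?_⟩
      · intro σ hσ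
        have := List.eq_of_mem_replicate hσ
        subst this
        exact ⟨isRound_one, by simp⟩
      · intro x _
        rw [rComp_replicate_one]
        rfl
    | @insert i s' hi ih =>
      obtain ⟨B, hBlen, hBmem, hBswap, hBfix⟩ := ih
      obtain ⟨A, hAlen, hAmem, hAcomp⟩ := pad_local G (Q i) (hpath i) (fun h => huv i i h) L (hlen i)
      have hdisjST : ∀ x, x ∈ (Q i).support → ¬ (∃ j ∈ s', x ∈ (Q j).support) := by
        rintro x hx ⟨j, hj, hxj⟩
        exact hdisj i j (fun h => hi (h ▸ hj)) x hx hxj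
      obtain ⟨hClen, hCmem, hCcomp⟩ := merge_lists A B (fun x => x ∈ (Q i).support)
        (fun x => ∃ j ∈ s', x ∈ (Q j).support) (hAlen.trans hBlen.symm) hAmem
        (fun σ hσ => ⟨(hBmem σ hσ).1, (hBmem σ hσ).2⟩) hdisjST
      have hrB : ∀ x, rComp B x ≠ x → ∃ j ∈ s', x ∈ (Q j).support :=
        rComp_support B _ (fun σ h => (hBmem σ h).2)
      have hrBfixQi : ∀ x, x ∈ (Q i).support → rComp B x = x := by
        intro x hx
        by_contra h
        exact hdisjST x hx (hrB x h)
      refine ⟨List.zipWith (· * ·) A B, hClen.trans hAlen, ?_, ?_, ?_⟩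
      · intro σ hσ
        refine ⟨(hCmem σ hσ).1, fun x hx => ?_⟩
        rcases (hCmem σ hσ).2 x hx with h | ⟨j, hj, hxj⟩
        · exact ⟨i, Finset.mem_insert_self _ _, h⟩
        · exact ⟨j, Finset.mem_insert_of_mem hj, hxj⟩
      · intro j hj
        have happ : ∀ x, rComp (List.zipWith (· * ·) A B) x = rComp A (rComp B x) := by
          intro x; rw [hCcomp]; rfl
        rcases Finset.mem_insert.1 hj with rfl | hj'
        · constructor
          · rw [happ, hrBfixQi _ (Q j).start_mem_support, hAcomp, Equiv.swap_apply_left]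
          · rw [happ, hrBfixQi _ (Q j).end_mem_support, hAcomp, Equiv.swap_apply_right]
        · have hij : j ≠ i := fun h => hi (h ▸ hj')
          constructor
          · rw [happ, (hBswap j hj').1, hAcomp,
              Equiv.swap_apply_of_ne_of_ne (fun h => huv i j h.symm)
                (fun h => hij (hvv j i h))]
          · rw [happ, (hBswap j hj').2, hAcomp,
              Equiv.swap_apply_of_ne_of_ne (fun h => hij (huu j i h)) (huv j i)]
      · intro x hx
        have h1 : rComp B x = x := hBfix x (fun j hj => hx j (Finset.mem_insert_of_mem hj))
        have h2 := hx i (Finset.mem_insert_self _ _)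
        have happ : rComp (List.zipWith (· * ·) A B) x = rComp A (rComp B x) := by
          rw [hCcomp]; rfl
        rw [happ, h1, hAcomp, Equiv.swap_apply_of_ne_of_ne h2.1 h2.2]
  obtain ⟨Lc, h1, h2, h3, h4⟩ := key Finset.univ
  have hcomp : rComp Lc = π := by
    apply Equiv.ext
    intro x
    by_cases hx : ∃ i, x = u i ∨ x = v i
    · obtain ⟨i, h | h⟩ := hx <;> subst h
      · rw [(h3 i (Finset.mem_univ i)).1, (hswap i).1]
      · rw [(h3 i (Finset.mem_univ i)).2, (hswap i).2]
    · push_neg at hx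
      rw [h4 x (fun i _ => hx i), hfix x (fun i => hx i)]
  apply Nat.sInf_le
  exact ⟨Lc, h1, fun σ h => (h2 σ h).1, hcomp⟩
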